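/- Let R be a symmetric real K×K matrix and let z : Fin K → ℝ satisfy z_k > 0 for all k. Then Σ_{k=1}^{K} Σ_{j=1}^{K} (z_j / z_k) · R_{kj}² ≥ Σ_{k=1}^{K} Σ_{j=1}^{K} R_{kj}², i.e., trace((diagonal z)⁻¹ · R · (diagonal z) · R) ≥ trace(R · R). -/

import Mathlib

open Matrix

lemma sum_sq_le_weighted (K : ℕ) (R : Matrix (Fin K) (Fin K) ℝ) (hR : Rᵀ = R)
    (z : Fin K → ℝ) (hz : ∀ k, 0 < z k) :
    ∑ k : Fin K, ∑ j : Fin K, R k j ^ 2 ≤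
      ∑ k : Fin K, ∑ j : Fin K, (z j / z k) * R k j ^ 2 := by
  have hsymm : ∀ k j, R j k = R k j := by
    intro k j
    conv_lhs => rw [← hR]
    rfl
  have hswap : (∑ k : Fin K, ∑ j : Fin K, (z j / z k) * R k j ^ 2)
      = ∑ k : Fin K, ∑ j : Fin K, (z k / z j) * R k j ^ 2 := by
    rw [Finset.sum_comm]
    congr 1; ext k; congr 1; ext j; rw [hsymm]
  have key : (2:ℝ) * (∑ k : Fin K, ∑ j : Fin K, R k j ^ 2)
      ≤ 2 * (∑ k : Fin K, ∑ j : Fin K, (z j / z k) * R k j ^ 2) := by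
    have : 2 * (∑ k : Fin K, ∑ j : Fin K, (z j / z k) * R k j ^ 2)
        = ∑ k : Fin K, ∑ j : Fin K, (z j / z k + z k / z j) * R k j ^ 2 := by
      rw [two_mul]; nth_rw 2 [hswap]
      rw [← Finset.sum_add_distrib]
      congr 1; ext k; rw [← Finset.sum_add_distrib]
      congr 1; ext j; ring
    rw [this, Finset.mul_sum]
    apply Finset.sum_le_sum; intro k _
    rw [Finset.mul_sum]
    apply Finset.sum_le_sum; intro j _
    have h2 : (2:ℝ) ≤ z j / z k + z k / z j := by
      rw [div_add_div _ _ (hz k).ne' (hz j).ne', le_div_iff₀ (mul_pos (hz k) (hz j))]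
      nlinarith [sq_nonneg (z j - z k)]
    nlinarith [sq_nonneg (R k j)]
  linarith

theorem weighted_squared_sum_ge (K : ℕ) (R : Matrix (Fin K) (Fin K) ℝ) (hR : Rᵀ = R)
    (z : Fin K → ℝ) (hz : ∀ k, 0 < z k) :
    (∑ k : Fin K, ∑ j : Fin K, R k j ^ 2 ≤
      ∑ k : Fin K, ∑ j : Fin K, (z j / z k) * R k j ^ 2) ∧
    (R * R).trace ≤ ((Matrix.diagonal z)⁻¹ * R * Matrix.diagonal z * R).trace := by
  have hsum := sum_sq_le_weighted K R hR z hz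
  refine ⟨hsum, ?_⟩
  have hsymm : ∀ k j, R j k = R k j := by
    intro k j
    conv_lhs => rw [← hR]
    rfl
  have hzne : ∀ k, z k ≠ 0 := fun k => (hz k).ne'
  have hinv : (Matrix.diagonal z)⁻¹ = Matrix.diagonal (fun k => (z k)⁻¹) := by
    apply Matrix.inv_eq_right_inv
    rw [Matrix.diagonal_mul_diagonal]
    have : (fun k => z k * (z k)⁻¹) = fun _ => (1:ℝ) :=
      funext fun k => mul_inv_cancel₀ (hzne k)
    rw [this, Matrix.diagonal_one]
  have h1 : (R * R).trace = ∑ k : Fin K, ∑ j : Fin K, R k j ^ 2 := by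
    simp [Matrix.trace, Matrix.mul_apply, Matrix.diag, sq]
    congr 1; ext k; congr 1; ext j; rw [hsymm]
  have h2 : ((Matrix.diagonal z)⁻¹ * R * Matrix.diagonal z * R).trace
      = ∑ k : Fin K, ∑ j : Fin K, (z j / z k) * R k j ^ 2 := by
    rw [hinv]
    simp [Matrix.trace, Matrix.mul_apply, Matrix.diag, Matrix.diagonal, Finset.mul_sum]
    congr 1; ext k; congr 1; ext j
    rw [hsymm]; field_simp
  rw [h1, h2]; exact hsum
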